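/- If α is an ordinal with cf(α) > ω₀, then the Stone–Čech compactification of the order-topology space α is α + 1; equivalently, every continuous bounded real-valued function on α extends continuously to α + 1. -/

import Mathlib

open Filter Set Topology

/-- A strictly increasing ω-sequence of ordinals tends to its supremum. -/
lemma ordinal_tendsto_iSup (u : ℕ → Ordinal.{0}) (hu : StrictMono u) :
    Tendsto u atTop (𝓝 (⨆ n, u n)) := by
  have hne : (⨆ n, u n) ≠ 0 := by
    intro h
    have h01 : u 0 < u 1 := hu Nat.zero_lt_one
    have hle := Ordinal.le_iSup u 1
    rw [h] at hle
    exact absurd (lt_of_lt_of_le h01 hle) (not_lt.mpr zero_le)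
  rw [(SuccOrder.hasBasis_nhds_Ioc_of_exists_lt ⟨0, lt_of_le_of_ne zero_le (Ne.symm hne)⟩).tendsto_right_iff]
  intro b hb
  obtain ⟨n, hn⟩ := Ordinal.lt_iSup_iff.mp hb
  filter_upwards [eventually_ge_atTop n] with m hm
  exact ⟨hn.trans_le (hu.monotone hm), Ordinal.le_iSup u m⟩

/-- Key lemma: a bounded continuous real function on an ordinal of uncountable cofinality
converges at the top. -/
lemma eventually_near (α : Ordinal.{0}) (hcf : Cardinal.aleph0 < α.cof)
    (f : ↥(Set.Iio α) → ℝ) (hf : Continuous f) (hbd : ∃ M, ∀ x, |f x| ≤ M) :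
    ∃ c : ℝ, ∀ ε > (0:ℝ), ∃ b < α, ∀ x (hx : x < α), b < x → |f ⟨x, hx⟩ - c| < ε := by
  have hlim : Order.IsSuccLimit α := Ordinal.aleph0_le_cof.mp hcf.le
  have h0 : (0:Ordinal) < α := hlim.pos
  have hsucc : ∀ b < α, b + 1 < α := fun b hb => hlim.succ_lt hb
  obtain ⟨M, hM⟩ := hbd
  haveI : Nonempty (Set.Iio α) := ⟨⟨0, h0⟩⟩
  -- cluster point
  have hle : Filter.map f atTop ≤ 𝓟 (Set.Icc (-M) M) := by
    rw [le_principal_iff, Filter.mem_map]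
    exact Filter.Eventually.of_forall fun x => Set.mem_Icc.mpr (abs_le.mp (hM x))
  obtain ⟨c, -, hc⟩ := (isCompact_Icc (a := -M) (b := M)).exists_clusterPt hle
  refine ⟨c, ?_⟩
  -- it suffices to show convergence
  suffices h : Tendsto f atTop (𝓝 c) by
    intro ε hε
    obtain ⟨N, hN⟩ := (Metric.tendsto_atTop.mp h) ε hε
    refine ⟨N.1, N.2, fun x hx hNx => ?_⟩
    have := hN ⟨x, hx⟩ (le_of_lt hNx)
    rwa [Real.dist_eq] at this
  by_contra hT
  rw [Metric.tendsto_atTop] at hT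
  push_neg at hT
  obtain ⟨ε, hε, hT⟩ := hT
  -- frequently within ε/2 of c (from cluster point)
  have H1 : ∀ b : Set.Iio α, ∃ x : Set.Iio α, b < x ∧ dist (f x) c < ε / 2 := by
    intro b
    have hb1 : b.1 + 1 < α := hsucc b.1 b.2
    have hmem : {x : Set.Iio α | (⟨b.1 + 1, hb1⟩ : Set.Iio α) ≤ x} ∈ atTop :=
      mem_atTop _
    have := clusterPt_iff_nonempty.mp hc (Metric.ball_mem_nhds c (show (0:ℝ) < ε/2 by linarith)) (image_mem_map hmem)
    obtain ⟨y, hy1, x, hx2, rfl⟩ := this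
    refine ⟨x, ?_, by simpa [Real.dist_eq] using hy1⟩
    exact lt_of_lt_of_le (by exact_mod_cast Order.lt_succ b.1) hx2
  -- frequently at distance ≥ ε from c
  have H2 : ∀ b : Set.Iio α, ∃ x : Set.Iio α, b < x ∧ ε ≤ dist (f x) c := by
    intro b
    have hb1 : b.1 + 1 < α := hsucc b.1 b.2
    obtain ⟨x, hx1, hx2⟩ := hT ⟨b.1 + 1, hb1⟩
    refine ⟨x, ?_, hx2⟩
    exact lt_of_lt_of_le (by exact_mod_cast Order.lt_succ b.1) hx1
  choose D hD1 hD2 using H1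
  choose E hE1 hE2 using H2
  -- interleaved sequence
  set u : ℕ → Set.Iio α := fun n => Nat.rec ⟨0, h0⟩ (fun k x => if Even k then D x else E x) n
    with hu_def
  have hu_succ : ∀ n, u (n + 1) = if Even n then D (u n) else E (u n) := fun n => rfl
  have humono : StrictMono u := by
    apply strictMono_nat_of_lt_succ
    intro n
    rw [hu_succ]
    split
    · exact hD1 (u n)
    · exact hE1 (u n)
  set v : ℕ → Ordinal := fun n => (u n).1 with hv_def
  have hvmono : StrictMono v := fun a b h => humono h
  have hvlt : ∀ n, v n < α := fun n => (u n).2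
  have hslt : (⨆ n, v n) < α := by
    apply Ordinal.iSup_lt_ord _ hvlt
    rwa [Cardinal.mk_nat]
  set s : Ordinal := ⨆ n, v n with hs_def
  have htv : Tendsto v atTop (𝓝 s) := ordinal_tendsto_iSup v hvmono
  have htu : Tendsto u atTop (𝓝 (⟨s, hslt⟩ : Set.Iio α)) := by
    rw [tendsto_subtype_rng]
    exact htv
  have hfu : Tendsto (fun n => f (u n)) atTop (𝓝 (f ⟨s, hslt⟩)) :=
    (hf.continuousAt.tendsto).comp htu
  rw [Metric.tendsto_atTop] at hfu
  obtain ⟨N, hN⟩ := hfu (ε / 4) (by linarith)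
  -- even step close to c
  have hclose : dist (f ⟨s, hslt⟩) c < 3 * ε / 4 := by
    have h1 : dist (f (u (2 * N + 1))) (f ⟨s, hslt⟩) < ε / 4 := hN (2 * N + 1) (by omega)
    have h2 : dist (f (u (2 * N + 1))) c < ε / 2 := by
      rw [hu_succ]; rw [if_pos (even_two_mul N)]; exact hD2 _
    calc dist (f ⟨s, hslt⟩) c ≤ dist (f ⟨s, hslt⟩) (f (u (2 * N + 1))) + dist (f (u (2 * N + 1))) c :=
          dist_triangle _ _ _
      _ < ε / 4 + ε / 2 := by rw [dist_comm]; linarith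
      _ = 3 * ε / 4 := by ring
  -- odd step far from c
  have hfar : ε ≤ dist (f (u (2 * N + 2))) c := by
    rw [hu_succ]
    rw [if_neg (by simp [Nat.even_add_one, parity_simps])]
    exact hE2 _
  have h3 : dist (f (u (2 * N + 2))) (f ⟨s, hslt⟩) < ε / 4 := hN (2 * N + 2) (by omega)
  have : ε < ε := by
    calc ε ≤ dist (f (u (2 * N + 2))) c := hfar
      _ ≤ dist (f (u (2 * N + 2))) (f ⟨s, hslt⟩) + dist (f ⟨s, hslt⟩) c := dist_triangle _ _ _
      _ < ε / 4 + 3 * ε / 4 := by linarith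
      _ = ε := by ring
  exact absurd this (lt_irrefl ε)

/-- If `cf(α) > ω₀`, then `β α = α + 1`: every bounded continuous real-valued function on
the ordinal space `α` extends continuously to `α + 1`. -/
theorem stoneCech_ordinal_eq_succ (α : Ordinal.{0}) (hcf : Cardinal.aleph0 < α.cof)
    (f : ↥(Set.Iio α) → ℝ) (hf : Continuous f) (hbd : ∃ M, ∀ x, |f x| ≤ M) :
    ∃ g : ↥(Set.Iic α) → ℝ, Continuous g ∧
      ∀ (x : Ordinal) (hx : x < α), g ⟨x, le_of_lt hx⟩ = f ⟨x, hx⟩ := by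
  obtain ⟨c, hc⟩ := eventually_near α hcf f hf hbd
  have hlim : Order.IsSuccLimit α := Ordinal.aleph0_le_cof.mp hcf.le
  have hα0 : α ≠ 0 := hlim.pos.ne'
  refine ⟨fun y => if h : y.1 < α then f ⟨y.1, h⟩ else c, ?_, ?_⟩
  · rw [continuous_iff_continuousAt]
    rintro ⟨y, hy⟩
    rcases lt_or_eq_of_le (show y ≤ α from hy) with hy' | hy'
    · -- interior point
      unfold ContinuousAt
      have hval : (fun z : Set.Iic α => if h : z.1 < α then f ⟨z.1, h⟩ else c) ⟨y, hy⟩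
          = f ⟨y, hy'⟩ := dif_pos hy'
      rw [hval]
      intro U hU
      have hfc : ContinuousAt f ⟨y, hy'⟩ := hf.continuousAt
      have : f ⁻¹' U ∈ 𝓝 (⟨y, hy'⟩ : Set.Iio α) := hfc hU
      replace this : f ⁻¹' U ∈ comap Subtype.val (𝓝 y) := (congrArg (f ⁻¹' U ∈ ·) nhds_subtype_eq_comap).mp this
      obtain ⟨V, hV, hVsub⟩ := this
      rw [Filter.mem_map, nhds_subtype_eq_comap]
      refine ⟨V ∩ Set.Iio α, Filter.inter_mem hV (isOpen_Iio.mem_nhds hy'), ?_⟩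
      rintro ⟨z, hz⟩ ⟨hzV, hzlt⟩
      have hthis : f ⟨z, hzlt⟩ ∈ U := hVsub (show (⟨z, hzlt⟩ : Set.Iio α).1 ∈ V from hzV)
      have hzlt' : z < α := hzlt
      show (if h : z < α then f ⟨z, h⟩ else c) ∈ U
      rw [dif_pos hzlt']
      exact hthis
    · -- the point α
      have hylt : ¬ y < α := by rw [hy']; exact lt_irrefl _
      unfold ContinuousAt
      have hval : (fun z : Set.Iic α => if h : z.1 < α then f ⟨z.1, h⟩ else c) ⟨y, hy⟩
          = c := dif_neg hylt
      rw [hval, Metric.tendsto_nhds]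
      intro ε hε
      obtain ⟨b, hb, hball⟩ := hc ε hε
      rw [nhds_subtype_eq_comap]
      show ∀ᶠ z in Filter.comap Subtype.val (𝓝 y), _
      rw [hy', eventually_comap]
      have hIoc : Set.Ioc b α ∈ 𝓝 α :=
        (SuccOrder.hasBasis_nhds_Ioc_of_exists_lt ⟨0, lt_of_le_of_ne zero_le (Ne.symm hα0)⟩).mem_of_mem hb
      filter_upwards [hIoc] with z hz w hw
      rcases lt_or_eq_of_le hz.2 with hzlt | hzeq
      · have : w.1 < α := by rw [hw]; exact hzlt
        rw [dif_pos this, Real.dist_eq]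
        have : w.1 = z := hw
        exact hball w.1 ‹w.1 < α› (by rw [this]; exact hz.1)
      · have : ¬ (w.1 < α) := by rw [hw, hzeq]; exact lt_irrefl α
        rw [dif_neg this, dist_self]
        exact hε
  · intro x hx
    exact dif_pos hx
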